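/- arXiv:2505.12128 — 5 statements merged into one kernel-verified Lean document; each statement's English description precedes it below -/
import Mathlib

section
/- For every integer k ≥ 1, 1/sqrt(π(k+1)) ≤ r_k ≤ 1/sqrt(πk), where r_k = (1/4^k) * binom(2k, k). -/
noncomputable def r (k : ℕ) : ℝ := (Nat.choose (2*k) k : ℝ) / 4^k

lemma r_key (k : ℕ) : (2*k+1 : ℝ) * Real.Wallis.W k * (r k)^2 = 1 := by
  have hc : ((2*k).choose k : ℝ) * (k.factorial : ℝ) * (k.factorial : ℝ)
      = ((2*k).factorial : ℝ) := by
    have h := Nat.choose_mul_factorial_mul_factorial (Nat.le_mul_of_pos_left k (by norm_num : 0 < 2))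
    have h2 : 2*k - k = k := by omega
    rw [h2] at h
    exact_mod_cast h
  have hc2 : ((2*k).choose k : ℝ)^2 * (k.factorial:ℝ)^4 = ((2*k).factorial:ℝ)^2 := by
    linear_combination (((2*k).choose k : ℝ) * (k.factorial : ℝ) * (k.factorial : ℝ)
      + ((2*k).factorial : ℝ)) * hc
  have hf : (0:ℝ) < (k.factorial : ℝ) := by exact_mod_cast k.factorial_pos
  have hf2 : (0:ℝ) < ((2*k).factorial : ℝ) := by exact_mod_cast (2*k).factorial_pos
  have h4 : ((4:ℝ))^k ≠ 0 := by positivity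
  have hpow : ((2:ℝ))^(4*k) = ((4:ℝ)^k)^2 := by
    rw [← pow_mul]
    rw [show (4:ℝ) = 2^2 by norm_num, ← pow_mul]
    ring_nf
  rw [r, Real.Wallis.W_eq_factorial_ratio, hpow]
  push_cast
  field_simp
  linear_combination hc2

theorem stmt_1 (k : ℕ) (hk : 1 ≤ k) :
    1 / Real.sqrt (Real.pi * (k + 1)) ≤ r k ∧ r k ≤ 1 / Real.sqrt (Real.pi * k) := by
  have hW := Real.Wallis.W_le k
  have hlW := Real.Wallis.le_W k
  have hWpos := Real.Wallis.W_pos k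
  have hkey := r_key k
  have hrpos : 0 < r k := by
    have : (0:ℝ) < ((2*k).choose k : ℝ) := by
      exact_mod_cast Nat.choose_pos (Nat.le_mul_of_pos_left k (by norm_num : 0 < 2))
    rw [r]; positivity
  have hpi := Real.pi_pos
  have hk1 : (1:ℝ) ≤ (k:ℝ) := by exact_mod_cast hk
  have hr2 : (r k)^2 = 1 / ((2*k+1 : ℝ) * Real.Wallis.W k) := by
    field_simp at hkey ⊢
    linarith [hkey]
  constructor
  · have hle : 1 / (Real.pi * (k+1)) ≤ (r k)^2 := by
      rw [hr2]
      apply one_div_le_one_div_of_le (by positivity)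
      nlinarith [mul_le_mul_of_nonneg_left hW (by positivity : (0:ℝ) ≤ 2*(k:ℝ)+1), hpi]
    calc 1 / Real.sqrt (Real.pi * (k+1))
        = Real.sqrt (1 / (Real.pi * (k+1))) := by
          rw [one_div, one_div, ← Real.sqrt_inv]
      _ ≤ r k := by
          rw [show r k = Real.sqrt ((r k)^2) by rw [Real.sqrt_sq hrpos.le]]
          exact Real.sqrt_le_sqrt hle
  · have hlW' : (2*(k:ℝ)+1)*(Real.pi/2) ≤ Real.Wallis.W k * (2*(k:ℝ)+2) := by
      rw [div_mul_eq_mul_div, div_le_iff₀ (by positivity)] at hlW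
      linarith [hlW]
    have hle : (r k)^2 ≤ 1 / (Real.pi * k) := by
      rw [hr2]
      apply one_div_le_one_div_of_le (by positivity)
      nlinarith [mul_le_mul_of_nonneg_left hlW' (by positivity : (0:ℝ) ≤ 2*(k:ℝ)+1), hpi,
        hWpos, mul_pos hpi (lt_of_lt_of_le one_pos hk1)]
    calc r k = Real.sqrt ((r k)^2) := by rw [Real.sqrt_sq hrpos.le]
      _ ≤ Real.sqrt (1 / (Real.pi * k)) := Real.sqrt_le_sqrt hle
      _ = 1 / Real.sqrt (Real.pi * k) := by
          rw [one_div, one_div, Real.sqrt_inv]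
end

section
/- For every integer p ≥ 1, the sum over k from 0 to p-1 of r_k^2 is at most 1 + log p, where r_k = binom(2k,k)/4^k. -/
lemma r_succ (k : ℕ) : r (k+1) = r k * (2*k+1) / (2*k+2) := by
  have h := Nat.succ_mul_centralBinom_succ k
  have h' : ((k+1 : ℕ) : ℝ) * (Nat.centralBinom (k+1) : ℝ)
      = 2 * (2*k+1) * (Nat.centralBinom k : ℝ) := by
    exact_mod_cast congrArg (Nat.cast : ℕ → ℝ) h
  simp only [Nat.centralBinom] at h'
  have hk : ((k:ℝ)+1) ≠ 0 := by positivity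
  simp only [r, Nat.mul_succ, Nat.mul_add] at *
  push_cast at h' ⊢
  field_simp
  ring_nf
  ring_nf at h'
  nlinarith [h', pow_pos (show (0:ℝ) < 4 by norm_num) k]

lemma r_sq_le (k : ℕ) : ((k:ℝ)+1) * (r k)^2 ≤ 1 := by
  induction k with
  | zero => simp [r]
  | succ k ih =>
    rw [r_succ]
    have hk2 : (0:ℝ) < 2*k+2 := by positivity
    have key : ((k:ℝ)+1+1) * (2*k+1)^2 ≤ ((k:ℝ)+1) * (2*k+2)^2 := by nlinarith [Nat.cast_nonneg (α := ℝ) k]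
    have hr : (0:ℝ) ≤ (r k)^2 := sq_nonneg _
    push_cast
    rw [div_pow, mul_pow, ← mul_div_assoc, div_le_one (by positivity)]
    nlinarith [mul_le_mul_of_nonneg_right key hr,
      mul_le_mul_of_nonneg_left ih (sq_nonneg ((2:ℝ)*k+2))]

theorem stmt_3 (p : ℕ) (hp : 1 ≤ p) :
    ∑ k ∈ Finset.range p, (r k)^2 ≤ 1 + Real.log p := by
  calc ∑ k ∈ Finset.range p, (r k)^2
      ≤ ∑ k ∈ Finset.range p, 1/((k:ℝ)+1) := by
        apply Finset.sum_le_sum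
        intro k _
        have h := r_sq_le k
        have hk : (0:ℝ) < (k:ℝ)+1 := by positivity
        rw [le_div_iff₀ hk]
        nlinarith [r_sq_le k]
    _ = (harmonic p : ℝ) := by
        rw [harmonic_eq_sum_Icc]
        push_cast
        rw [show Finset.Icc 1 p = Finset.Ico 1 (p+1) by rw [Finset.Ico_add_one_right_eq_Icc],
          Finset.sum_Ico_eq_sum_range]
        simp [add_comm, one_div]
    _ ≤ 1 + Real.log p := harmonic_le_one_add_log p
end

section
/- Fix 0 ≤ β ≤ 1 and define tilde_c_k^β = sum over j from 0 to k of tilde_r_j β^j tilde_r_{k-j}, where tilde_r_j = (-1)^j binom(1/2,j). Then for all k ≥ 1, tilde_r_k (1+β) ≤ tilde_c_k^β ≤ 0. -/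
/-- Generalized binomial coefficient `binom(x, k) = x(x-1)⋯(x-k+1)/k!`. -/
noncomputable def gbinom (x : ℝ) (k : ℕ) : ℝ :=
  (∏ i ∈ Finset.range k, (x - i)) / (Nat.factorial k)

noncomputable def tr (j : ℕ) : ℝ := (-1)^j * gbinom (1/2) j

noncomputable def tc (β : ℝ) (k : ℕ) : ℝ :=
  ∑ j ∈ Finset.range (k + 1), tr j * β^j * tr (k - j)

lemma desc_smeval (x : ℝ) (k : ℕ) :
    (descPochhammer ℤ k).smeval x = ∏ i ∈ Finset.range k, (x - i) := by
  induction k with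
  | zero => simp [descPochhammer_zero, Polynomial.smeval_one]
  | succ n ih =>
      rw [descPochhammer_succ_right, Polynomial.smeval_mul, ih, Finset.prod_range_succ,
        Polynomial.smeval_sub, Polynomial.smeval_X, Polynomial.smeval_natCast]
      ring

lemma gbinom_eq (x : ℝ) (k : ℕ) : gbinom x k = Ring.choose x k := by
  have h := Ring.descPochhammer_eq_factorial_smul_choose x k
  rw [desc_smeval, nsmul_eq_mul] at h
  rw [gbinom, h]
  field_simp

lemma gbinom_vandermonde (k : ℕ) :
    ∑ j ∈ Finset.range (k + 1), gbinom (1/2) j * gbinom (1/2) (k - j) = (Nat.choose 1 k : ℝ) := by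
  have h := Ring.add_choose_eq (r := (1/2 : ℝ)) (s := (1/2 : ℝ)) k (Commute.all _ _)
  rw [Finset.Nat.sum_antidiagonal_eq_sum_range_succ_mk] at h
  have h2 : (1/2 : ℝ) + 1/2 = ((1 : ℕ) : ℝ) := by norm_num
  rw [h2, Ring.choose_natCast] at h
  rw [h]
  refine Finset.sum_congr rfl fun j hj => ?_
  rw [gbinom_eq, gbinom_eq]

lemma tr_zero : tr 0 = 1 := by simp [tr, gbinom]

lemma gbinom_succ (x : ℝ) (j : ℕ) :
    gbinom x (j + 1) = gbinom x j * (x - j) / (j + 1) := by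
  rw [gbinom, gbinom, Finset.prod_range_succ, Nat.factorial_succ]
  have hf : (Nat.factorial j : ℝ) ≠ 0 := by exact_mod_cast Nat.factorial_ne_zero j
  have hj1 : ((j:ℝ) + 1) ≠ 0 := by positivity
  push_cast
  field_simp

lemma tr_succ (j : ℕ) : tr (j + 1) = tr j * ((j - 1/2) / (j + 1)) := by
  rw [tr, tr, pow_succ, gbinom_succ]
  ring

lemma tr_neg {j : ℕ} (hj : 1 ≤ j) : tr j < 0 := by
  induction j with
  | zero => omega
  | succ n ih =>
      rcases Nat.eq_or_lt_of_le hj with h | h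
      · have : tr 1 = -(1/2) := by
          rw [show tr 1 = tr (0 + 1) from rfl, tr_succ, tr_zero]
          norm_num
        rw [← h, this]; norm_num
      · have hn : 1 ≤ n := by omega
        have h1 := ih hn
        rw [tr_succ]
        have hpos : (0:ℝ) < ((n : ℝ) - 1/2) / (n + 1) := by
          apply div_pos
          · have : (1:ℝ) ≤ (n:ℝ) := by exact_mod_cast hn
            linarith
          · positivity
        exact mul_neg_of_neg_of_pos h1 hpos

lemma tr_conv (k : ℕ) :
    ∑ j ∈ Finset.range (k + 1), tr j * tr (k - j) = (-1)^k * (Nat.choose 1 k : ℝ) := by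
  have : ∀ j ∈ Finset.range (k + 1),
      tr j * tr (k - j) = (-1)^k * (gbinom (1/2) j * gbinom (1/2) (k - j)) := by
    intro j hj
    have hjk : j ≤ k := by
      have := Finset.mem_range.mp hj; omega
    rw [tr, tr]
    have : (-1:ℝ)^j * (-1)^(k - j) = (-1)^k := by
      rw [← pow_add]
      congr 1
      omega
    rw [← this]
    ring
  rw [Finset.sum_congr rfl this, ← Finset.mul_sum, gbinom_vandermonde]

lemma tr_conv_nonpos {k : ℕ} (hk : 1 ≤ k) :
    ∑ j ∈ Finset.range (k + 1), tr j * tr (k - j) ≤ 0 := by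
  rw [tr_conv]
  rcases Nat.eq_or_lt_of_le hk with h | h
  · rw [← h]; norm_num
  · rw [Nat.choose_eq_zero_of_lt h]; norm_num

theorem stmt_11 (β : ℝ) (hβ0 : 0 ≤ β) (hβ1 : β ≤ 1) (k : ℕ) (hk : 1 ≤ k) :
    tr k * (1 + β) ≤ tc β k ∧ tc β k ≤ 0 := by
  have hβk0 : 0 ≤ β ^ k := pow_nonneg hβ0 k
  constructor
  · -- lower bound
    have hsplit : tc β k =
        tr k + (∑ j ∈ Finset.Ico 1 k, tr j * β^j * tr (k - j)) + tr k * β^k := by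
      rw [tc, Finset.sum_range_succ]
      have h0 : Finset.range k = Finset.Ico 0 k := by rw [Finset.range_eq_Ico]
      rw [h0, Finset.sum_eq_sum_Ico_succ_bot (by omega : 0 < k)]
      rw [tr_zero, Nat.sub_self, tr_zero, Nat.sub_zero]
      ring
    have hmid : 0 ≤ ∑ j ∈ Finset.Ico 1 k, tr j * β^j * tr (k - j) := by
      apply Finset.sum_nonneg
      intro j hj
      obtain ⟨hj1, hj2⟩ := Finset.mem_Ico.mp hj
      have h1 : tr j < 0 := tr_neg hj1
      have h2 : tr (k - j) < 0 := tr_neg (by omega)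
      have h3 : 0 ≤ β ^ j := pow_nonneg hβ0 j
      have h4 := mul_nonneg (mul_nonneg (neg_nonneg.mpr h1.le) h3) (neg_nonneg.mpr h2.le)
      nlinarith [h4]
    have htrk : tr k < 0 := tr_neg hk
    have hβle : β ^ k ≤ β := by
      calc β ^ k ≤ β ^ 1 := pow_le_pow_of_le_one hβ0 hβ1 hk
      _ = β := pow_one β
    nlinarith
  · -- upper bound
    have hrefl : tc β k = ∑ j ∈ Finset.range (k + 1), tr j * β^(k-j) * tr (k - j) := by
      rw [tc, ← Finset.sum_range_reflect]
      refine Finset.sum_congr rfl fun j hj => ?_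
      have hjk : j ≤ k := by have := Finset.mem_range.mp hj; omega
      have h1 : k + 1 - 1 - j = k - j := by omega
      have h2 : k - (k - j) = j := by omega
      rw [h1, h2]
      ring
    have hdbl : 2 * tc β k =
        ∑ j ∈ Finset.range (k + 1), tr j * tr (k - j) * (β^j + β^(k-j)) := by
      rw [two_mul]
      nth_rewrite 2 [hrefl]
      rw [tc, ← Finset.sum_add_distrib]
      refine Finset.sum_congr rfl fun j hj => ?_
      ring
    have hpt : ∀ j ∈ Finset.range (k + 1),
        tr j * tr (k - j) * (β^j + β^(k-j)) ≤ tr j * tr (k - j) * (1 + β^k) := by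
      intro j hj
      have hjk : j ≤ k := by have := Finset.mem_range.mp hj; omega
      by_cases hj0 : j = 0
      · subst hj0; simp
      by_cases hjke : j = k
      · subst hjke
        rw [Nat.sub_self, pow_zero]
        ring_nf
        exact le_rfl
      · have h1 : tr j < 0 := tr_neg (by omega)
        have h2 : tr (k - j) < 0 := tr_neg (by omega)
        have hc : 0 ≤ tr j * tr (k - j) := by nlinarith
        apply mul_le_mul_of_nonneg_left _ hc
        have hprod : β ^ j * β ^ (k - j) = β ^ k := by
          rw [← pow_add]; congr 1; omega
        have hb1 : β ^ j ≤ 1 := pow_le_one₀ hβ0 hβ1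
        have hb2 : β ^ (k - j) ≤ 1 := pow_le_one₀ hβ0 hβ1
        nlinarith [mul_nonneg (sub_nonneg.mpr hb1) (sub_nonneg.mpr hb2)]
    have hsum : 2 * tc β k ≤ (∑ j ∈ Finset.range (k + 1), tr j * tr (k - j)) * (1 + β^k) := by
      rw [hdbl, Finset.sum_mul]
      exact Finset.sum_le_sum hpt
    have hS := tr_conv_nonpos hk
    have h5 : (0:ℝ) ≤ 1 + β ^ k := by linarith
    nlinarith [mul_nonneg (neg_nonneg.mpr hS) h5]
end

section
/- Let n ≥ 1, let A be the n×n lower-triangular all-ones matrix (prefix-sum matrix), and for λ in (0,1) let C_λ^{-1} be the lower triangular Toeplitz matrix with first column (1, -λ, 0, ..., 0). Then the product A·C_λ^{-1} is the lower triangular Toeplitz matrix with first column (1, 1-λ, 1-λ, ..., 1-λ), and the quantity E(λ)^2 = (1/n)(1 + (1-λ)^2 (n-1)) · sum_{k=0}^{n-1} λ^{2k} satisfies inf over λ in (0,1) of E(λ)^2 ≤ 2/sqrt(n). -/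
open Finset in
theorem stmt_17 (n : ℕ) (hn : 1 ≤ n)
    (A : Matrix (Fin n) (Fin n) ℝ)
    (hA : ∀ i j : Fin n, A i j = if (j : ℕ) ≤ (i : ℕ) then 1 else 0)
    (Cinv : ℝ → Matrix (Fin n) (Fin n) ℝ)
    (hCinv : ∀ lam : ℝ, ∀ i j : Fin n,
      Cinv lam i j = if (i : ℕ) = (j : ℕ) then 1
        else if (i : ℕ) = (j : ℕ) + 1 then -lam else 0) :
    (∀ lam ∈ Set.Ioo (0 : ℝ) 1, ∀ i j : Fin n,
      (A * Cinv lam) i j =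
        if (i : ℕ) = (j : ℕ) then 1
        else if (j : ℕ) < (i : ℕ) then 1 - lam else 0) ∧
    sInf ((fun lam : ℝ =>
        (1 / (n : ℝ)) * (1 + (1 - lam)^2 * ((n : ℝ) - 1)) *
          ∑ k ∈ Finset.range n, lam^(2 * k)) '' Set.Ioo (0 : ℝ) 1)
      ≤ 2 / Real.sqrt n := by
  constructor
  · intro lam hl i j
    rw [Matrix.mul_apply]
    have key : ∀ k : Fin n, A i k * Cinv lam k j =
        (if k = j then (if (j:ℕ) ≤ (i:ℕ) then (1:ℝ) else 0) else 0)
        + (if (k:ℕ) = (j:ℕ)+1 then (if (k:ℕ) ≤ (i:ℕ) then -lam else 0) else 0) := by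
      intro k
      rw [hA, hCinv]
      rcases eq_or_ne (k:ℕ) (j:ℕ) with h | h
      · have hk : k = j := Fin.ext h
        subst hk
        simp [h]
      · have hk : k ≠ j := fun e => h (by rw [e])
        rcases eq_or_ne (k:ℕ) ((j:ℕ)+1) with h2 | h2
        · simp only [if_neg h, if_pos h2, if_neg hk]
          by_cases h3 : (k:ℕ) ≤ (i:ℕ) <;> simp [h3]
        · simp [h, h2, hk]
    rw [Finset.sum_congr rfl (fun k _ => key k), Finset.sum_add_distrib]
    have h1 : ∑ k : Fin n, (if k = j then (if (j:ℕ) ≤ (i:ℕ) then (1:ℝ) else 0) else 0)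
        = (if (j:ℕ) ≤ (i:ℕ) then (1:ℝ) else 0) := by
      simp
    have h2 : ∑ k : Fin n, (if (k:ℕ) = (j:ℕ)+1 then (if (k:ℕ) ≤ (i:ℕ) then -lam else 0) else 0)
        = if (j:ℕ)+1 ≤ (i:ℕ) then -lam else 0 := by
      by_cases h : (j:ℕ)+1 ≤ (i:ℕ)
      · have hlt : (j:ℕ)+1 < n := lt_of_le_of_lt h i.isLt
        rw [Finset.sum_eq_single (⟨(j:ℕ)+1, hlt⟩ : Fin n)]
        · simp [h]
        · intro b _ hb
          have hb' : (b:ℕ) ≠ (j:ℕ)+1 := fun e => hb (Fin.ext e)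
          simp [hb']
        · intro hmem; exact absurd (Finset.mem_univ _) hmem
      · rw [if_neg h]
        apply Finset.sum_eq_zero
        intro k _
        by_cases hk : (k:ℕ) = (j:ℕ)+1
        · have hni : ¬ (k:ℕ) ≤ (i:ℕ) := by omega
          rw [if_pos hk, if_neg hni]
        · simp [hk]
    rw [h1, h2]
    by_cases hij : (i:ℕ) = (j:ℕ)
    · have ha : (j:ℕ) ≤ (i:ℕ) := by omega
      have hb : ¬ (j:ℕ)+1 ≤ (i:ℕ) := by omega
      simp [hij, ha, hb]
    · by_cases hlt : (j:ℕ) < (i:ℕ)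
      · have ha : (j:ℕ) ≤ (i:ℕ) := by omega
        have hb : (j:ℕ)+1 ≤ (i:ℕ) := by omega
        simp [hij, hlt, ha, hb]
        ring
      · have ha : ¬ (j:ℕ) ≤ (i:ℕ) := by omega
        have hb : ¬ (j:ℕ)+1 ≤ (i:ℕ) := by omega
        simp [hij, hlt, ha, hb]
  · -- sInf part
    set f : ℝ → ℝ := fun lam =>
        (1 / (n : ℝ)) * (1 + (1 - lam)^2 * ((n : ℝ) - 1)) *
          ∑ k ∈ Finset.range n, lam^(2 * k) with hf
    have hbdd : BddBelow (f '' Set.Ioo (0:ℝ) 1) := by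
      refine ⟨0, ?_⟩
      rintro x ⟨lam, hlam, rfl⟩
      have h1 : (1:ℝ) ≤ n := by exact_mod_cast hn
      have : (0:ℝ) ≤ ∑ k ∈ Finset.range n, lam^(2*k) := by
        apply Finset.sum_nonneg
        intro k _
        have : lam ^ (2*k) = (lam^2)^k := by rw [pow_mul]
        rw [this]; positivity
      have h2 : (0:ℝ) ≤ 1 + (1 - lam)^2 * ((n:ℝ) - 1) := by nlinarith
      positivity
    rcases eq_or_lt_of_le hn with h1 | h2
    · -- n = 1
      have hn1 : n = 1 := h1.symm
      subst hn1
      have hmem : f (1/2) ∈ f '' Set.Ioo (0:ℝ) 1 :=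
        Set.mem_image_of_mem f (by constructor <;> norm_num)
      have := csInf_le hbdd hmem
      have hval : f (1/2) = 1 := by simp [hf]
      rw [hval] at this
      calc sInf (f '' Set.Ioo (0:ℝ) 1) ≤ 1 := this
        _ ≤ 2 / Real.sqrt ((1:ℕ):ℝ) := by norm_num
    · -- n ≥ 2
      have hn2 : 2 ≤ n := h2
      have hm1 : (1:ℝ) < (n:ℝ) := by exact_mod_cast h2
      set s := Real.sqrt n with hs
      have hs1 : 1 < s := by
        rw [hs]
        have := Real.lt_sqrt (x := 1) (y := (n:ℝ)) (by norm_num)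
        rw [show ((1:ℝ))^2 = 1 by ring] at this
        exact this.mpr hm1
      have hs0 : 0 < s := lt_trans one_pos hs1
      have hss : s * s = (n:ℝ) := Real.mul_self_sqrt (by positivity)
      set t : ℝ := 1 - 1/s with ht
      have hs' : 1/s < 1 := by rw [div_lt_one hs0]; exact hs1
      have hs'' : 0 < 1/s := by positivity
      have ht0 : 0 < t := by rw [ht]; linarith
      have ht1 : t < 1 := by rw [ht]; linarith
      set lam := Real.sqrt t with hl
      have hl0 : 0 < lam := Real.sqrt_pos.mpr ht0
      have hl1 : lam < 1 := by
        rw [hl]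
        calc Real.sqrt t < Real.sqrt 1 := Real.sqrt_lt_sqrt (le_of_lt ht0) ht1
          _ = 1 := Real.sqrt_one
      have hlsq : lam^2 = t := Real.sq_sqrt (le_of_lt ht0)
      have hmem : f lam ∈ f '' Set.Ioo (0:ℝ) 1 :=
        Set.mem_image_of_mem f ⟨hl0, hl1⟩
      refine le_trans (csInf_le hbdd hmem) ?_
      -- bound f lam ≤ 2 / s
      have hG : ∑ k ∈ Finset.range n, lam^(2*k) ≤ s := by
        have hrw : ∀ k, lam^(2*k) = t^k := by
          intro k; rw [pow_mul, hlsq]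
        rw [Finset.sum_congr rfl (fun k _ => hrw k)]
        have hgeo : ∑ k ∈ Finset.range n, t^k = (1 - t^n)/(1 - t) := by
          rw [geom_sum_eq (ne_of_lt ht1)]
          rw [div_eq_div_iff (by linarith) (by linarith)]
          ring
        rw [hgeo]
        have htn : 0 ≤ t^n := by positivity
        have h1t : 1 - t = 1/s := by rw [ht]; ring
        rw [h1t]
        rw [div_le_iff₀ (by positivity)]
        have hinv : s * (1/s) = 1 := by field_simp
        linarith
      have hGnn : 0 ≤ ∑ k ∈ Finset.range n, lam^(2*k) := by
        apply Finset.sum_nonneg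
        intro k _
        rw [pow_mul, hlsq]; positivity
      have hX : (1 - lam)^2 * ((n:ℝ) - 1) ≤ 1 := by
        have hlam_ge : t ≤ lam := by
          nlinarith [hlsq, hl0, hl1]
        have h1lam : 1 - lam ≤ 1/s := by
          rw [ht] at hlam_ge; linarith
        have h1lnn : 0 ≤ 1 - lam := by linarith
        have hsq : (1 - lam)^2 ≤ (1/s)^2 := by nlinarith
        have : (1/s)^2 = 1/(n:ℝ) := by
          rw [div_pow, one_pow, sq, hss]
        rw [this] at hsq
        have : (1 - lam)^2 * ((n:ℝ)-1) ≤ (1/(n:ℝ)) * ((n:ℝ)-1) := by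
          apply mul_le_mul_of_nonneg_right hsq (by linarith)
        refine le_trans this ?_
        rw [div_mul_eq_mul_div, one_mul, div_le_one (by linarith)]
        linarith
      have hXnn : 0 ≤ (1 - lam)^2 * ((n:ℝ)-1) := by nlinarith
      have hfval : f lam ≤ (1/(n:ℝ)) * 2 * s := by
        rw [hf]
        dsimp only
        have h2 : 1 + (1 - lam)^2 * ((n:ℝ)-1) ≤ 2 := by linarith
        calc (1 / (n : ℝ)) * (1 + (1 - lam)^2 * ((n : ℝ) - 1)) *
              ∑ k ∈ Finset.range n, lam^(2 * k)
            ≤ (1 / (n : ℝ)) * 2 * ∑ k ∈ Finset.range n, lam^(2 * k) := by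
              apply mul_le_mul_of_nonneg_right _ hGnn
              apply mul_le_mul_of_nonneg_left h2 (by positivity)
          _ ≤ (1 / (n : ℝ)) * 2 * s := by
              apply mul_le_mul_of_nonneg_left hG (by positivity)
      refine le_trans hfval ?_
      rw [show (1/(n:ℝ)) * 2 * s = 2 * s / (n:ℝ) by ring, ← hss]
      rw [div_le_div_iff₀ (by positivity) hs0]
      nlinarith
end

section
/- Let C ∈ R^{m×n} have columns C_1, ..., C_n partitioned into b disjoint groups S_1, ..., S_b. Define sens^2 = max over j in [1,b] of the supremum over subsets S ⊆ S_j of ||sum_{i in S} C_i||_2^2. Then sens^2 ≥ (1/(4b)) ||C||_F^2. -/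
open Finset in
private lemma aux_lin {ι : Type*} [DecidableEq ι] (s : Finset ι) (c : ι → ℝ) :
    2 * ∑ T ∈ s.powerset, ∑ i ∈ T, c i = 2 ^ s.card * ∑ i ∈ s, c i := by
  induction s using Finset.induction_on with
  | empty => simp
  | @insert a s ha ih =>
    rw [Finset.sum_powerset_insert ha, Finset.card_insert_of_notMem ha,
      Finset.sum_insert ha]
    have h : ∀ T ∈ s.powerset, ∑ i ∈ insert a T, c i = c a + ∑ i ∈ T, c i := by
      intro T hT
      rw [Finset.sum_insert fun h => ha (Finset.mem_powerset.mp hT h)]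
    rw [Finset.sum_congr rfl h, Finset.sum_add_distrib, Finset.sum_const,
      Finset.card_powerset]
    push_cast
    ring_nf
    nlinarith [ih]

open Finset in
private lemma aux_sq {ι : Type*} [DecidableEq ι] (s : Finset ι) (c : ι → ℝ) :
    4 * ∑ T ∈ s.powerset, (∑ i ∈ T, c i) ^ 2
      = 2 ^ s.card * ((∑ i ∈ s, (c i) ^ 2) + (∑ i ∈ s, c i) ^ 2) := by
  induction s using Finset.induction_on with
  | empty => simp
  | @insert a s ha ih =>
    rw [Finset.sum_powerset_insert ha, Finset.card_insert_of_notMem ha,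
      Finset.sum_insert ha, Finset.sum_insert ha]
    have h : ∀ T ∈ s.powerset, (∑ i ∈ insert a T, c i) ^ 2
        = (c a) ^ 2 + 2 * c a * (∑ i ∈ T, c i) + (∑ i ∈ T, c i) ^ 2 := by
      intro T hT
      rw [Finset.sum_insert fun h => ha (Finset.mem_powerset.mp hT h)]
      ring
    rw [Finset.sum_congr rfl h, Finset.sum_add_distrib, Finset.sum_add_distrib,
      Finset.sum_const, Finset.card_powerset, ← Finset.mul_sum]
    have hlin := aux_lin s c
    simp only [nsmul_eq_mul]
    push_cast
    linear_combination 2 * ih + 4 * (c a) * hlin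

open Finset in
private lemma aux_exists (m n : ℕ) (C : Matrix (Fin m) (Fin n) ℝ) (s : Finset (Fin n)) :
    ∃ T ⊆ s, (1/4) * ∑ i ∈ s, ∑ a : Fin m, (C a i) ^ 2
      ≤ ∑ a : Fin m, (∑ i ∈ T, C a i) ^ 2 := by
  have key : (2 : ℝ) ^ s.card * ((1/4) * ∑ i ∈ s, ∑ a : Fin m, (C a i) ^ 2)
      ≤ ∑ T ∈ s.powerset, ∑ a : Fin m, (∑ i ∈ T, C a i) ^ 2 := by
    have : ∑ a : Fin m, ∑ T ∈ s.powerset, (∑ i ∈ T, C a i) ^ 2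
        = ∑ a : Fin m, (2 ^ s.card / 4) * ((∑ i ∈ s, (C a i) ^ 2) + (∑ i ∈ s, C a i) ^ 2) := by
      refine Finset.sum_congr rfl fun a _ => ?_
      have := aux_sq s (fun i => C a i)
      field_simp
      linarith [this]
    have hrw : ∑ T ∈ s.powerset, ∑ a : Fin m, (∑ i ∈ T, C a i) ^ 2
        = ∑ a : Fin m, ∑ T ∈ s.powerset, (∑ i ∈ T, C a i) ^ 2 := Finset.sum_comm
    have hrw2 : ∑ i ∈ s, ∑ a : Fin m, (C a i) ^ 2
        = ∑ a : Fin m, ∑ i ∈ s, (C a i) ^ 2 := Finset.sum_comm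
    rw [hrw, this, hrw2]
    have h1 : ∀ a : Fin m, (2:ℝ) ^ s.card / 4 * ((∑ i ∈ s, (C a i) ^ 2))
        ≤ 2 ^ s.card / 4 * ((∑ i ∈ s, (C a i) ^ 2) + (∑ i ∈ s, C a i) ^ 2) := by
      intro a
      have : (0:ℝ) ≤ (∑ i ∈ s, C a i) ^ 2 := sq_nonneg _
      nlinarith [pow_pos (by norm_num : (0:ℝ) < 2) s.card]
    calc (2 : ℝ) ^ s.card * ((1/4) * ∑ a : Fin m, ∑ i ∈ s, (C a i) ^ 2)
        = ∑ a : Fin m, (2:ℝ) ^ s.card / 4 * (∑ i ∈ s, (C a i) ^ 2) := by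
          rw [Finset.mul_sum, Finset.mul_sum]
          exact Finset.sum_congr rfl fun a _ => by ring
      _ ≤ _ := Finset.sum_le_sum fun a _ => h1 a
  by_contra hcon
  push_neg at hcon
  have hlt : ∑ T ∈ s.powerset, ∑ a : Fin m, (∑ i ∈ T, C a i) ^ 2
      < ∑ T ∈ s.powerset, ((1/4) * ∑ i ∈ s, ∑ a : Fin m, (C a i) ^ 2) := by
    apply Finset.sum_lt_sum_of_nonempty ⟨∅, Finset.empty_mem_powerset s⟩
    intro T hT
    exact hcon T (Finset.mem_powerset.mp hT)
  rw [Finset.sum_const, Finset.card_powerset, nsmul_eq_mul] at hlt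
  push_cast at hlt
  linarith [key]

open Finset in
theorem stmt_18 (m n b : ℕ) (hb : 1 ≤ b)
    (C : Matrix (Fin m) (Fin n) ℝ)
    (S : Fin b → Finset (Fin n))
    (hdisj : ∀ j j' : Fin b, j ≠ j' → Disjoint (S j) (S j'))
    (hcover : ∀ i : Fin n, ∃ j : Fin b, i ∈ S j)
    (sens2 : ℝ)
    (hsens2 : ∀ j : Fin b, ∀ T ⊆ S j,
      ∑ a : Fin m, (∑ i ∈ T, C a i)^2 ≤ sens2) :
    sens2 ≥ (1 / (4 * b)) * ∑ a : Fin m, ∑ i : Fin n, (C a i)^2 := by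
  have hQ : ∀ j : Fin b, (1/4) * ∑ i ∈ S j, ∑ a : Fin m, (C a i) ^ 2 ≤ sens2 := by
    intro j
    obtain ⟨T, hTsub, hT⟩ := aux_exists m n C (S j)
    exact hT.trans (hsens2 j T hTsub)
  have hsum : ∑ j : Fin b, ((1/4) * ∑ i ∈ S j, ∑ a : Fin m, (C a i) ^ 2)
      ≤ ∑ j : Fin b, sens2 := Finset.sum_le_sum fun j _ => hQ j
  have hcov : (Finset.univ : Finset (Fin b)).biUnion S = Finset.univ := by
    apply Finset.eq_univ_of_forall
    intro i
    obtain ⟨j, hj⟩ := hcover i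
    exact Finset.mem_biUnion.mpr ⟨j, Finset.mem_univ j, hj⟩
  have htot : ∑ j : Fin b, ∑ i ∈ S j, ∑ a : Fin m, (C a i) ^ 2
      = ∑ i : Fin n, ∑ a : Fin m, (C a i) ^ 2 := by
    rw [← Finset.sum_biUnion (fun j _ j' _ hjj' => hdisj j j' hjj'), hcov]
  rw [Finset.sum_const, Finset.card_univ, Fintype.card_fin, nsmul_eq_mul] at hsum
  rw [← Finset.mul_sum, htot] at hsum
  have hb' : (0:ℝ) < b := by exact_mod_cast hb
  rw [ge_iff_le, Finset.sum_comm]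
  rw [div_mul_eq_mul_div, one_mul, div_le_iff₀ (by positivity)]
  calc ∑ i : Fin n, ∑ a : Fin m, (C a i) ^ 2
      = 4 * ((1/4) * ∑ i : Fin n, ∑ a : Fin m, (C a i) ^ 2) := by ring
    _ ≤ 4 * ((b:ℝ) * sens2) := by linarith
    _ = sens2 * (4 * b) := by ring
end
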